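/- arXiv:2209.02043 — 2 statements merged into one kernel-verified Lean document; each statement's English description precedes it below -/
import Mathlib

section
/- For all indices i, j, k, ℓ ∈ {1, …, M}, the second mixed moment of the Monte-Carlo weight estimators satisfies N² E[γ̂²_{ij} γ̂²_{kℓ}] = N E[ε_{11}⁴] Σ_{p=1}^n W_{ip} W_{jp} W_{kp} W_{ℓp} + N E[ε_{11}²]² Σ_{p≠q} W_{ip} W_{jp} W_{kq} W_{ℓq} + N E[ε_{11}²]² Σ_{p≠q} W_{ip} W_{jq} W_{kp} W_{ℓq} + N E[ε_{11}²]² Σ_{p≠q} W_{ip} W_{jq} W_{kq} W_{ℓp} + N(N−1) E[ε_{11}²]² Σ_{p,q=1}^n W_{ip} W_{jp} W_{kq} W_{ℓq}, where sums indexed by p≠q range over ordered pairs of distinct indices in {1, …, n}. -/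
open MeasureTheory ProbabilityTheory
open scoped ENNReal

lemma aux_integral_prod {Ω ι : Type*} [MeasurableSpace Ω] {μ : Measure Ω}
    [IsProbabilityMeasure μ] {f : ι → Ω → ℝ}
    (hindep : iIndepFun f μ) (hmeas : ∀ i, Measurable (f i))
    (s : Finset ι) :
    ∫ ω, ∏ t ∈ s, f t ω ∂μ = ∏ t ∈ s, ∫ ω, f t ω ∂μ := by
  classical
  induction s using Finset.cons_induction with
  | empty => simp
  | cons a s ha ih =>
    have hInd : IndepFun (f a) (∏ j ∈ s, f j) μ :=
      (hindep.indepFun_finsetProd_of_notMem hmeas ha).symm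
    have hprodmeas : Measurable (∏ j ∈ s, f j) := by
      rw [show (∏ j ∈ s, f j) = fun ω => ∏ j ∈ s, f j ω from funext fun ω => by
        simp [Finset.prod_apply]]
      exact s.measurable_prod (fun i _ => hmeas i)
    have h := hInd.integral_mul_eq_mul_integral (hmeas a).aestronglyMeasurable
      hprodmeas.aestronglyMeasurable
    have e1 : integral μ (f a * ∏ j ∈ s, f j) = ∫ ω, ∏ t ∈ Finset.cons a s ha, f t ω ∂μ :=
      congrArg (integral μ) (funext fun ω => by simp only [Pi.mul_apply, Finset.prod_apply, Finset.prod_cons])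
    have e2 : integral μ (∏ j ∈ s, f j) = ∫ ω, ∏ t ∈ s, f t ω ∂μ :=
      congrArg (integral μ) (funext fun ω => by simp [Finset.prod_apply])
    rw [Finset.prod_cons, ← ih, ← e1, h, e2]

lemma aux_E4 {Ω ι : Type*} [MeasurableSpace Ω] {μ : Measure Ω} [IsProbabilityMeasure μ]
    [DecidableEq ι] {ε : ι → Ω → ℝ}
    (hindep : iIndepFun ε μ) (hmeas : ∀ t, Measurable (ε t))
    (hmean : ∀ t, ∫ ω, ε t ω ∂μ = 0) (hvar : ∀ t, ∫ ω, (ε t ω) ^ 2 ∂μ = 1)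
    {m4 : ℝ} (hm4 : ∀ t, ∫ ω, (ε t ω) ^ 4 ∂μ = m4) (u v w x : ι) :
    ∫ ω, ε u ω * ε v ω * ε w ω * ε x ω ∂μ =
      if u = v ∧ w = x ∧ u = w then m4 else if u = v ∧ w = x then 1
      else if u = w ∧ v = x then 1 else if u = x ∧ v = w then 1 else 0 := by
  have icongr : ∀ {f g : Ω → ℝ}, (∀ ω, f ω = g ω) → ∫ ω, f ω ∂μ = ∫ ω, g ω ∂μ :=
    fun h => by congr 1; exact funext h
  have pair : ∀ a b : ι, a ≠ b → ∫ ω, ε a ω * ε b ω ∂μ = 0 := by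
    intro a b hab
    have h : ∫ ω, ε a ω * ε b ω ∂μ = (∫ ω, ε a ω ∂μ) * ∫ ω, ε b ω ∂μ :=
      (hindep.indepFun hab).integral_mul_eq_mul_integral (hmeas a).aestronglyMeasurable
        (hmeas b).aestronglyMeasurable
    rw [h, hmean, hmean, mul_zero]
  have sq : ∀ a : ι, ∫ ω, ε a ω * ε a ω ∂μ = 1 := by
    intro a
    rw [icongr (g := fun ω => ε a ω ^ 2) (fun ω => (_root_.sq (ε a ω)).symm)]
    exact hvar a
  have mulmul : ∀ a b c d : ι, a ≠ c → a ≠ d → b ≠ c → b ≠ d →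
      ∫ ω, ε a ω * ε b ω * (ε c ω * ε d ω) ∂μ =
        (∫ ω, ε a ω * ε b ω ∂μ) * ∫ ω, ε c ω * ε d ω ∂μ := by
    intro a b c d h1 h2 h3 h4
    exact (hindep.indepFun_mul_mul hmeas a b c d h1 h2 h3 h4).integral_mul_eq_mul_integral
      ((hmeas a).mul (hmeas b)).aestronglyMeasurable
      ((hmeas c).mul (hmeas d)).aestronglyMeasurable
  have cube : ∀ a b : ι, a ≠ b → ∫ ω, ε a ω * ε a ω * ε a ω * ε b ω ∂μ = 0 := by
    intro a b hab
    have hcomp : IndepFun ((fun y : ℝ => y * y * y) ∘ ε a) (id ∘ ε b) μ :=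
      (hindep.indepFun hab).comp (by measurability) measurable_id
    have h := hcomp.integral_mul_eq_mul_integral
      (((hmeas a).mul (hmeas a)).mul (hmeas a)).aestronglyMeasurable
      (hmeas b).aestronglyMeasurable
    have h2 : ∫ ω, ε a ω * ε a ω * ε a ω * ε b ω ∂μ =
        (∫ ω, ε a ω * ε a ω * ε a ω ∂μ) * ∫ ω, ε b ω ∂μ := h
    rw [h2, hmean, mul_zero]
  by_cases huw : u = w
  · subst huw
    by_cases hvx : v = x
    · subst hvx
      by_cases huv : u = v
      · subst huv
        rw [icongr (g := fun ω => ε u ω ^ 4) (fun ω => by ring)]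
        simp [hm4 u]
      · rw [icongr (g := fun ω => ε u ω * ε u ω * (ε v ω * ε v ω)) (fun ω => by ring),
          mulmul u u v v huv huv huv huv, sq, sq]
        simp [huv]
    · by_cases huv : u = v
      · subst huv
        rw [cube u x hvx]
        simp [hvx]
      · by_cases hux : u = x
        · subst hux
          rw [icongr (g := fun ω => ε u ω * ε u ω * ε u ω * ε v ω) (fun ω => by ring),
            cube u v huv]
          simp [huv, hvx, Ne.symm huv]
        · rw [icongr (g := fun ω => ε u ω * ε u ω * (ε v ω * ε x ω)) (fun ω => by ring),
            mulmul u u v x huv hux huv hux, sq, pair v x hvx, mul_zero]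
          simp [huv, hvx, hux]
  · by_cases hux : u = x
    · subst hux
      by_cases hvw : v = w
      · subst hvw
        have huv : u ≠ v := huw
        rw [icongr (g := fun ω => ε u ω * ε u ω * (ε v ω * ε v ω)) (fun ω => by ring),
          mulmul u u v v huv huv huv huv, sq, sq]
        simp [huv, huw, Ne.symm huv]
      · by_cases huv : u = v
        · subst huv
          rw [icongr (g := fun ω => ε u ω * ε u ω * ε u ω * ε w ω) (fun ω => by ring),
            cube u w huw]
          simp [huw, hvw, Ne.symm huw]
        · rw [icongr (g := fun ω => ε u ω * ε u ω * (ε v ω * ε w ω)) (fun ω => by ring),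
            mulmul u u v w huv huw huv huw, sq, pair v w hvw, mul_zero]
          simp [huv, huw, hvw]
    · by_cases hvw : v = w
      · subst hvw
        have huv : u ≠ v := huw
        by_cases hvx : v = x
        · subst hvx
          rw [icongr (g := fun ω => ε v ω * ε v ω * ε v ω * ε u ω) (fun ω => by ring),
            cube v u (Ne.symm huv)]
          simp [huv, huw, hux]
        · rw [icongr (g := fun ω => ε v ω * ε v ω * (ε u ω * ε x ω)) (fun ω => by ring),
            mulmul v v u x (Ne.symm huv) hvx (Ne.symm huv) hvx, sq, pair u x hux, mul_zero]
          simp [huv, huw, hux, hvx]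
      · by_cases hvx : v = x
        · subst hvx
          have huv : u ≠ v := hux
          rw [icongr (g := fun ω => ε v ω * ε v ω * (ε u ω * ε w ω)) (fun ω => by ring),
            mulmul v v u w (Ne.symm huv) hvw (Ne.symm huv) hvw, sq, pair u w huw, mul_zero]
          simp [huv, huw, hux, hvw]
        · rw [icongr (g := fun ω => ε u ω * ε v ω * (ε w ω * ε x ω)) (fun ω => by ring),
            mulmul u v w x huw hux hvw hvx]
          by_cases huv : u = v
          · by_cases hwx : w = x
            · subst huv; subst hwx
              rw [sq, sq]
              simp [huw]
            · rw [pair w x hwx, mul_zero]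
              simp [hwx, huw, hux, hvw, hvx]
          · rw [pair u v huv, zero_mul]
            simp [huv, huw, hux, hvw, hvx]

lemma aux_half : (1:ℝ≥0∞)/2 = 1/4 + 1/4 := by
  rw [ENNReal.div_add_div_same, show (1:ℝ≥0∞)+1 = 2 by norm_num,
    ENNReal.div_eq_div_iff (by norm_num) (by norm_num) (by norm_num) (by norm_num)]
  norm_num

lemma aux_one : (1:ℝ≥0∞)/1 = 1/2 + 1/2 := by
  rw [ENNReal.div_add_div_same, show (1:ℝ≥0∞)+1 = 2 by norm_num,
    ENNReal.div_self (by norm_num) (by norm_num), ENNReal.div_self (by norm_num) (by norm_num)]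

lemma aux_int4 {Ω : Type*} [MeasurableSpace Ω] {μ : Measure Ω}
    {f g h k : Ω → ℝ} (hf : MemLp f 4 μ) (hg : MemLp g 4 μ)
    (hh : MemLp h 4 μ) (hk : MemLp k 4 μ) :
    Integrable (fun ω => f ω * g ω * h ω * k ω) μ := by
  have h2 : ∀ {a b : Ω → ℝ}, MemLp a 4 μ → MemLp b 4 μ → MemLp (a * b) 2 μ := by
    intro a b ha hb
    have : MemLp (a • b) 2 μ := (haveI : ENNReal.HolderTriple 4 4 2 := ⟨by simpa [one_div] using aux_half.symm⟩; MemLp.smul hb ha)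
    simpa [smul_eq_mul] using this
  have h1 : MemLp ((f * g) * (h * k)) 1 μ := by
    have : MemLp ((f * g) • (h * k)) 1 μ := (haveI : ENNReal.HolderTriple 2 2 1 := ⟨by simpa [one_div] using aux_one.symm⟩; MemLp.smul (h2 hh hk) (h2 hf hg))
    simpa [smul_eq_mul] using this
  have := memLp_one_iff_integrable.mp h1
  exact this.congr (by filter_upwards with ω using by simp [Pi.mul_apply]; ring)

lemma aux_ptwise {α : Type*} [DecidableEq α] (m4 : ℝ) (p q r s : α) :
    (if p = q ∧ r = s ∧ p = r then m4 else if p = q ∧ r = s then 1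
      else if p = r ∧ q = s then 1 else if p = s ∧ q = r then 1 else 0)
    = (m4 - 3) * (if p = q ∧ r = s ∧ p = r then 1 else 0)
      + (if p = q then (1:ℝ) else 0) * (if r = s then (1:ℝ) else 0)
      + (if p = r then (1:ℝ) else 0) * (if q = s then (1:ℝ) else 0)
      + (if p = s then (1:ℝ) else 0) * (if q = r then (1:ℝ) else 0) := by
  by_cases h1 : p = q <;> by_cases h2 : r = s <;> by_cases h3 : p = r <;>
    by_cases h4 : q = s <;> by_cases h5 : p = s <;> by_cases h6 : q = r <;>
    simp_all <;> ring

lemma aux_split {n : ℕ} (f : Fin n → Fin n → ℝ) :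
    ∑ p : Fin n, ∑ q : Fin n, (if p = q then 0 else f p q)
    = (∑ p : Fin n, ∑ q : Fin n, f p q) - ∑ p : Fin n, f p p := by
  rw [← Finset.sum_sub_distrib]
  refine Finset.sum_congr rfl fun p _ => ?_
  rw [eq_sub_iff_add_eq,
    show f p p = ∑ q : Fin n, (if p = q then f p q else 0) by simp,
    ← Finset.sum_add_distrib]
  refine Finset.sum_congr rfl fun q _ => ?_
  by_cases h : p = q <;> simp [h]
/-- Second mixed moment of the Monte-Carlo weight estimators:
`N² E[γ̂²_{ij} γ̂²_{kℓ}] = N E[ε₁₁⁴] ∑_p W_{ip} W_{jp} W_{kp} W_{ℓp}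
 + N E[ε₁₁²]² ∑_{p≠q} W_{ip} W_{jp} W_{kq} W_{ℓq}
 + N E[ε₁₁²]² ∑_{p≠q} W_{ip} W_{jq} W_{kp} W_{ℓq}
 + N E[ε₁₁²]² ∑_{p≠q} W_{ip} W_{jq} W_{kq} W_{ℓp}
 + N(N−1) E[ε₁₁²]² ∑_{p,q} W_{ip} W_{jp} W_{kq} W_{ℓq}`. -/
theorem mc_weight_estimator_second_mixed_moment
    {Ω : Type*} [MeasurableSpace Ω] (μ : Measure Ω) [IsProbabilityMeasure μ]
    {M n N : ℕ} (hn : 0 < n) (hN : 0 < N)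
    (W : Matrix (Fin M) (Fin n) ℝ)
    (ε : Fin n × Fin N → Ω → ℝ)
    (hmeas : ∀ pk, Measurable (ε pk))
    (hindep : iIndepFun ε μ)
    (hident : ∀ pk qk, IdentDistrib (ε pk) (ε qk) μ μ)
    (hL4 : ∀ pk, MemLp (ε pk) 4 μ)
    (hmean : ∀ pk, ∫ ω, ε pk ω ∂μ = 0)
    (hvar : ∀ pk, ∫ ω, (ε pk ω) ^ 2 ∂μ = 1)
    (i j k l : Fin M) :
    (N : ℝ) ^ 2 *
        ∫ ω,
          ((N : ℝ)⁻¹ * ∑ a : Fin N,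
              (∑ p : Fin n, W i p * ε (p, a) ω) * (∑ p : Fin n, W j p * ε (p, a) ω)) *
          ((N : ℝ)⁻¹ * ∑ b : Fin N,
              (∑ p : Fin n, W k p * ε (p, b) ω) * (∑ p : Fin n, W l p * ε (p, b) ω)) ∂μ
      = (N : ℝ) * (∫ ω, (ε (⟨0, hn⟩, ⟨0, hN⟩) ω) ^ 4 ∂μ) *
            ∑ p : Fin n, W i p * W j p * W k p * W l p
        + (N : ℝ) * (∫ ω, (ε (⟨0, hn⟩, ⟨0, hN⟩) ω) ^ 2 ∂μ) ^ 2 *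
            ∑ p : Fin n, ∑ q : Fin n,
              (if p = q then 0 else W i p * W j p * W k q * W l q)
        + (N : ℝ) * (∫ ω, (ε (⟨0, hn⟩, ⟨0, hN⟩) ω) ^ 2 ∂μ) ^ 2 *
            ∑ p : Fin n, ∑ q : Fin n,
              (if p = q then 0 else W i p * W j q * W k p * W l q)
        + (N : ℝ) * (∫ ω, (ε (⟨0, hn⟩, ⟨0, hN⟩) ω) ^ 2 ∂μ) ^ 2 *
            ∑ p : Fin n, ∑ q : Fin n,
              (if p = q then 0 else W i p * W j q * W k q * W l p)
        + (N : ℝ) * ((N : ℝ) - 1) * (∫ ω, (ε (⟨0, hn⟩, ⟨0, hN⟩) ω) ^ 2 ∂μ) ^ 2 *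
            ∑ p : Fin n, ∑ q : Fin n, W i p * W j p * W k q * W l q := by
  have hNR : ((N : ℝ)) ≠ 0 := Nat.cast_ne_zero.mpr hN.ne'
  set t0 : Fin n × Fin N := (⟨0, hn⟩, ⟨0, hN⟩) with ht0
  -- kill the second-moment factors
  rw [hvar t0, one_pow, mul_one, mul_one]
  set m4 : ℝ := ∫ ω, (ε t0 ω) ^ 4 ∂μ with hm4def
  have hm4 : ∀ t : Fin n × Fin N, ∫ ω, (ε t ω) ^ 4 ∂μ = m4 :=
    fun t => ((hident t t0).comp (measurable_id.pow_const 4)).integral_eq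
  have icongr : ∀ {f g : Ω → ℝ}, (∀ ω, f ω = g ω) → ∫ ω, f ω ∂μ = ∫ ω, g ω ∂μ :=
    fun h => by congr 1; exact funext h
  have hInt : ∀ u v w x : Fin n × Fin N,
      Integrable (fun ω => ε u ω * ε v ω * ε w ω * ε x ω) μ :=
    fun u v w x => aux_int4 (hL4 u) (hL4 v) (hL4 w) (hL4 x)
  -- strip the N⁻¹ factors
  rw [icongr (g := fun ω => ((N : ℝ)⁻¹ * (N : ℝ)⁻¹) *
      ((∑ a : Fin N, (∑ p : Fin n, W i p * ε (p, a) ω) * (∑ p : Fin n, W j p * ε (p, a) ω)) *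
       (∑ b : Fin N, (∑ p : Fin n, W k p * ε (p, b) ω) * (∑ p : Fin n, W l p * ε (p, b) ω))))
      (fun ω => by ring), MeasureTheory.integral_const_mul, ← mul_assoc,
    show ((N : ℝ)) ^ 2 * ((N : ℝ)⁻¹ * (N : ℝ)⁻¹) = 1 by field_simp, one_mul]
  -- expand the product of sums pointwise
  have hpt : ∀ ω : Ω,
      (∑ a : Fin N, (∑ p : Fin n, W i p * ε (p, a) ω) * (∑ p : Fin n, W j p * ε (p, a) ω)) *
      (∑ b : Fin N, (∑ p : Fin n, W k p * ε (p, b) ω) * (∑ p : Fin n, W l p * ε (p, b) ω))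
      = ∑ a : Fin N, ∑ b : Fin N, ∑ p : Fin n, ∑ q : Fin n, ∑ r : Fin n, ∑ s : Fin n,
          (W i p * W j q * W k r * W l s) *
            (ε (p, a) ω * ε (q, a) ω * ε (r, b) ω * ε (s, b) ω) := by
    intro ω
    rw [Finset.sum_mul_sum]
    refine Finset.sum_congr rfl fun a _ => Finset.sum_congr rfl fun b _ => ?_
    rw [Finset.sum_mul, Finset.sum_mul]
    refine Finset.sum_congr rfl fun p _ => ?_
    rw [Finset.mul_sum, Finset.sum_mul]
    refine Finset.sum_congr rfl fun q _ => ?_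
    rw [Finset.sum_mul, Finset.mul_sum]
    refine Finset.sum_congr rfl fun r _ => ?_
    rw [Finset.mul_sum, Finset.mul_sum]
    exact Finset.sum_congr rfl fun s _ => by ring
  rw [icongr hpt]
  -- interchange integral and sums, and evaluate the fourth moments
  have hswap : ∫ ω, (∑ a : Fin N, ∑ b : Fin N, ∑ p : Fin n, ∑ q : Fin n, ∑ r : Fin n,
        ∑ s : Fin n, (W i p * W j q * W k r * W l s) *
          (ε (p, a) ω * ε (q, a) ω * ε (r, b) ω * ε (s, b) ω)) ∂μ
      = ∑ a : Fin N, ∑ b : Fin N, ∑ p : Fin n, ∑ q : Fin n, ∑ r : Fin n, ∑ s : Fin n,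
          (W i p * W j q * W k r * W l s) *
            (if (p, a) = (q, a) ∧ (r, b) = (s, b) ∧ (p, a) = (r, b) then m4
              else if (p, a) = (q, a) ∧ (r, b) = (s, b) then 1
              else if (p, a) = (r, b) ∧ (q, a) = (s, b) then 1
              else if (p, a) = (s, b) ∧ (q, a) = (r, b) then 1 else 0) := by
    have I5 : ∀ (a b : Fin N) (p q r : Fin n), Integrable (fun ω => ∑ s : Fin n,
        (W i p * W j q * W k r * W l s) *
          (ε (p, a) ω * ε (q, a) ω * ε (r, b) ω * ε (s, b) ω)) μ :=
      fun a b p q r => integrable_finset_sum _ fun s _ => (hInt _ _ _ _).const_mul _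
    have I4 : ∀ (a b : Fin N) (p q : Fin n), Integrable (fun ω => ∑ r : Fin n, ∑ s : Fin n,
        (W i p * W j q * W k r * W l s) *
          (ε (p, a) ω * ε (q, a) ω * ε (r, b) ω * ε (s, b) ω)) μ :=
      fun a b p q => integrable_finset_sum _ fun r _ => I5 a b p q r
    have I3 : ∀ (a b : Fin N) (p : Fin n), Integrable (fun ω => ∑ q : Fin n, ∑ r : Fin n,
        ∑ s : Fin n, (W i p * W j q * W k r * W l s) *
          (ε (p, a) ω * ε (q, a) ω * ε (r, b) ω * ε (s, b) ω)) μ :=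
      fun a b p => integrable_finset_sum _ fun q _ => I4 a b p q
    have I2 : ∀ (a b : Fin N), Integrable (fun ω => ∑ p : Fin n, ∑ q : Fin n, ∑ r : Fin n,
        ∑ s : Fin n, (W i p * W j q * W k r * W l s) *
          (ε (p, a) ω * ε (q, a) ω * ε (r, b) ω * ε (s, b) ω)) μ :=
      fun a b => integrable_finset_sum _ fun p _ => I3 a b p
    have I1 : ∀ (a : Fin N), Integrable (fun ω => ∑ b : Fin N, ∑ p : Fin n, ∑ q : Fin n,
        ∑ r : Fin n, ∑ s : Fin n, (W i p * W j q * W k r * W l s) *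
          (ε (p, a) ω * ε (q, a) ω * ε (r, b) ω * ε (s, b) ω)) μ :=
      fun a => integrable_finset_sum _ fun b _ => I2 a b
    rw [integral_finset_sum _ fun a _ => I1 a]
    refine Finset.sum_congr rfl fun a _ => ?_
    rw [integral_finset_sum _ fun b _ => I2 a b]
    refine Finset.sum_congr rfl fun b _ => ?_
    rw [integral_finset_sum _ fun p _ => I3 a b p]
    refine Finset.sum_congr rfl fun p _ => ?_
    rw [integral_finset_sum _ fun q _ => I4 a b p q]
    refine Finset.sum_congr rfl fun q _ => ?_
    rw [integral_finset_sum _ fun r _ => I5 a b p q r]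
    refine Finset.sum_congr rfl fun r _ => ?_
    rw [integral_finset_sum _ fun s _ => (hInt _ _ _ _).const_mul _]
    refine Finset.sum_congr rfl fun s _ => ?_
    rw [integral_const_mul, aux_E4 hindep hmeas hmean hvar hm4 (p, a) (q, a) (r, b) (s, b)]
  rw [hswap]
  -- off-diagonal terms
  have hoff : ∀ a b : Fin N, a ≠ b →
      (∑ p : Fin n, ∑ q : Fin n, ∑ r : Fin n, ∑ s : Fin n,
        (W i p * W j q * W k r * W l s) *
          (if (p, a) = (q, a) ∧ (r, b) = (s, b) ∧ (p, a) = (r, b) then m4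
            else if (p, a) = (q, a) ∧ (r, b) = (s, b) then 1
            else if (p, a) = (r, b) ∧ (q, a) = (s, b) then 1
            else if (p, a) = (s, b) ∧ (q, a) = (r, b) then 1 else 0))
      = ∑ p : Fin n, ∑ q : Fin n, W i p * W j p * W k q * W l q := by
    intro a b hab
    have hQ : ∀ p q r s : Fin n,
        (W i p * W j q * W k r * W l s) *
          (if (p, a) = (q, a) ∧ (r, b) = (s, b) ∧ (p, a) = (r, b) then m4
            else if (p, a) = (q, a) ∧ (r, b) = (s, b) then 1
            else if (p, a) = (r, b) ∧ (q, a) = (s, b) then 1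
            else if (p, a) = (s, b) ∧ (q, a) = (r, b) then 1 else 0)
        = (W i p * W j q * W k r * W l s) * (if p = q ∧ r = s then (1:ℝ) else 0) := by
      intro p q r s
      congr 1
      simp [Prod.ext_iff, hab]
    calc (∑ p : Fin n, ∑ q : Fin n, ∑ r : Fin n, ∑ s : Fin n,
          (W i p * W j q * W k r * W l s) *
            (if (p, a) = (q, a) ∧ (r, b) = (s, b) ∧ (p, a) = (r, b) then m4
              else if (p, a) = (q, a) ∧ (r, b) = (s, b) then 1
              else if (p, a) = (r, b) ∧ (q, a) = (s, b) then 1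
              else if (p, a) = (s, b) ∧ (q, a) = (r, b) then 1 else 0))
        = ∑ p : Fin n, ∑ q : Fin n, ∑ r : Fin n, ∑ s : Fin n,
            (W i p * W j q * W k r * W l s) * (if p = q ∧ r = s then (1:ℝ) else 0) := by
          exact Finset.sum_congr rfl fun p _ => Finset.sum_congr rfl fun q _ =>
            Finset.sum_congr rfl fun r _ => Finset.sum_congr rfl fun s _ => hQ p q r s
      _ = ∑ p : Fin n, ∑ q : Fin n, W i p * W j p * W k q * W l q := by
          simp only [ite_and, mul_ite, mul_one, mul_zero, Finset.sum_ite_irrel,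
            Finset.sum_ite_eq, Finset.sum_ite_eq', Finset.mem_univ, if_true,
            Finset.sum_const_zero]
  -- diagonal terms
  have hdiag : ∀ a : Fin N,
      (∑ p : Fin n, ∑ q : Fin n, ∑ r : Fin n, ∑ s : Fin n,
        (W i p * W j q * W k r * W l s) *
          (if (p, a) = (q, a) ∧ (r, a) = (s, a) ∧ (p, a) = (r, a) then m4
            else if (p, a) = (q, a) ∧ (r, a) = (s, a) then 1
            else if (p, a) = (r, a) ∧ (q, a) = (s, a) then 1
            else if (p, a) = (s, a) ∧ (q, a) = (r, a) then 1 else 0))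
      = m4 * (∑ p : Fin n, W i p * W j p * W k p * W l p)
        + (∑ p : Fin n, ∑ q : Fin n, (if p = q then 0 else W i p * W j p * W k q * W l q))
        + (∑ p : Fin n, ∑ q : Fin n, (if p = q then 0 else W i p * W j q * W k p * W l q))
        + (∑ p : Fin n, ∑ q : Fin n, (if p = q then 0 else W i p * W j q * W k q * W l p)) := by
    intro a
    have hQ : ∀ p q r s : Fin n,
        (W i p * W j q * W k r * W l s) *
          (if (p, a) = (q, a) ∧ (r, a) = (s, a) ∧ (p, a) = (r, a) then m4
            else if (p, a) = (q, a) ∧ (r, a) = (s, a) then 1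
            else if (p, a) = (r, a) ∧ (q, a) = (s, a) then 1
            else if (p, a) = (s, a) ∧ (q, a) = (r, a) then 1 else 0)
        = (W i p * W j q * W k r * W l s) *
            ((m4 - 3) * (if p = q ∧ r = s ∧ p = r then 1 else 0)
              + (if p = q then (1:ℝ) else 0) * (if r = s then (1:ℝ) else 0)
              + (if p = r then (1:ℝ) else 0) * (if q = s then (1:ℝ) else 0)
              + (if p = s then (1:ℝ) else 0) * (if q = r then (1:ℝ) else 0)) := by
      intro p q r s
      rw [← aux_ptwise m4 p q r s]
      congr 1
      simp [Prod.ext_iff]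
    rw [Finset.sum_congr rfl fun p _ => Finset.sum_congr rfl fun q _ =>
      Finset.sum_congr rfl fun r _ => Finset.sum_congr rfl fun s _ => hQ p q r s]
    simp only [mul_add, Finset.sum_add_distrib]
    rw [show (∑ p : Fin n, ∑ q : Fin n, ∑ r : Fin n, ∑ s : Fin n,
          (W i p * W j q * W k r * W l s) *
            ((m4 - 3) * (if p = q ∧ r = s ∧ p = r then (1:ℝ) else 0)))
        = (m4 - 3) * ∑ p : Fin n, W i p * W j p * W k p * W l p by
      simp only [ite_and, mul_ite, mul_one, mul_zero, Finset.sum_ite_irrel, Finset.sum_ite_eq,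
        Finset.sum_ite_eq', Finset.mem_univ, if_true, Finset.sum_const_zero, Finset.mul_sum]
      exact Finset.sum_congr rfl fun p _ => by ring]
    rw [show (∑ p : Fin n, ∑ q : Fin n, ∑ r : Fin n, ∑ s : Fin n,
          (W i p * W j q * W k r * W l s) *
            ((if p = q then (1:ℝ) else 0) * (if r = s then (1:ℝ) else 0)))
        = ∑ p : Fin n, ∑ q : Fin n, W i p * W j p * W k q * W l q by
      simp only [ite_and, mul_ite, mul_one, mul_zero, Finset.sum_ite_irrel, Finset.sum_ite_eq,
        Finset.sum_ite_eq', Finset.mem_univ, if_true, Finset.sum_const_zero]]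
    rw [show (∑ p : Fin n, ∑ q : Fin n, ∑ r : Fin n, ∑ s : Fin n,
          (W i p * W j q * W k r * W l s) *
            ((if p = r then (1:ℝ) else 0) * (if q = s then (1:ℝ) else 0)))
        = ∑ p : Fin n, ∑ q : Fin n, W i p * W j q * W k p * W l q by
      simp only [ite_and, mul_ite, mul_one, mul_zero, Finset.sum_ite_irrel, Finset.sum_ite_eq,
        Finset.sum_ite_eq', Finset.mem_univ, if_true, Finset.sum_const_zero]]
    rw [show (∑ p : Fin n, ∑ q : Fin n, ∑ r : Fin n, ∑ s : Fin n,
          (W i p * W j q * W k r * W l s) *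
            ((if p = s then (1:ℝ) else 0) * (if q = r then (1:ℝ) else 0)))
        = ∑ p : Fin n, ∑ q : Fin n, W i p * W j q * W k q * W l p by
      simp only [ite_and, mul_ite, mul_one, mul_zero, Finset.sum_ite_irrel, Finset.sum_ite_eq,
        Finset.sum_ite_eq', Finset.mem_univ, if_true, Finset.sum_const_zero]]
    rw [aux_split (fun p q => W i p * W j p * W k q * W l q),
      aux_split (fun p q => W i p * W j q * W k p * W l q),
      aux_split (fun p q => W i p * W j q * W k q * W l p)]
    ring
  -- assemble
  have hrow : ∀ a : Fin N,
      (∑ b : Fin N, ∑ p : Fin n, ∑ q : Fin n, ∑ r : Fin n, ∑ s : Fin n,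
        (W i p * W j q * W k r * W l s) *
          (if (p, a) = (q, a) ∧ (r, b) = (s, b) ∧ (p, a) = (r, b) then m4
            else if (p, a) = (q, a) ∧ (r, b) = (s, b) then 1
            else if (p, a) = (r, b) ∧ (q, a) = (s, b) then 1
            else if (p, a) = (s, b) ∧ (q, a) = (r, b) then 1 else 0))
      = ((N : ℝ) - 1) * (∑ p : Fin n, ∑ q : Fin n, W i p * W j p * W k q * W l q)
        + (m4 * (∑ p : Fin n, W i p * W j p * W k p * W l p)
          + (∑ p : Fin n, ∑ q : Fin n, (if p = q then 0 else W i p * W j p * W k q * W l q))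
          + (∑ p : Fin n, ∑ q : Fin n, (if p = q then 0 else W i p * W j q * W k p * W l q))
          + (∑ p : Fin n, ∑ q : Fin n, (if p = q then 0 else W i p * W j q * W k q * W l p))) := by
    intro a
    rw [← Finset.sum_erase_add _ _ (Finset.mem_univ a), hdiag a]
    congr 1
    rw [Finset.sum_congr rfl fun b hb => hoff a b (Ne.symm (Finset.mem_erase.mp hb).1),
      Finset.sum_const, Finset.card_erase_of_mem (Finset.mem_univ a), Finset.card_univ,
      Fintype.card_fin, nsmul_eq_mul, Nat.cast_sub hN, Nat.cast_one]
  rw [Finset.sum_congr rfl fun a _ => hrow a, Finset.sum_const, Finset.card_univ,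
    Fintype.card_fin, nsmul_eq_mul]
  ring
end

section
/- For all indices i, j, k, ℓ ∈ {1, …, M}, the covariance of the Monte-Carlo weight estimators satisfies Cov(γ̂²_{ij}, γ̂²_{kℓ}) = E[γ̂²_{ij} γ̂²_{kℓ}] − γ²_{ij} γ²_{kℓ} = (1/N) { V[ε_{11}²] Σ_{p=1}^n W_{ip} W_{jp} W_{kp} W_{ℓp} + E[ε_{11}²]² Σ_{p≠q} W_{ip} W_{jq} W_{kp} W_{ℓq} + E[ε_{11}²]² Σ_{p≠q} W_{ip} W_{jq} W_{kq} W_{ℓp} }, where γ²_{ij} = Σ_{p=1}^n W_{ip} W_{jp} and sums indexed by p≠q range over ordered pairs of distinct indices in {1, …, n}. -/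
open MeasureTheory ProbabilityTheory
open scoped ENNReal NNReal

set_option linter.unusedSectionVars false
set_option maxHeartbeats 1000000

section helpers
variable {Ω : Type*} [MeasurableSpace Ω] {μ : Measure Ω} [IsProbabilityMeasure μ]

lemma aux_quarter : (4:ℝ≥0∞)⁻¹ + 4⁻¹ = 2⁻¹ := by
  rw [show (4:ℝ≥0∞)⁻¹ = 2⁻¹ * 2⁻¹ by
    rw [← ENNReal.mul_inv (by norm_num) (by norm_num)]; norm_num,
    ← mul_add, ENNReal.inv_two_add_inv_two, mul_one]

lemma aux_memLp_mul4 {f g : Ω → ℝ} (hf : MemLp f 4 μ) (hg : MemLp g 4 μ) :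
    MemLp (fun ω => f ω * g ω) 2 μ := by
  have h := hf.smul hg (p := 4) (q := 4) (r := 2)
    (hpqr := ⟨aux_quarter⟩)
  have h' : MemLp (f * g) 2 μ := by simpa [smul_eq_mul, mul_comm] using h
  exact h'

lemma aux_integrable_mul2 {f g : Ω → ℝ} (hf : MemLp f 2 μ) (hg : MemLp g 2 μ) :
    Integrable (fun ω => f ω * g ω) μ := by
  have h := hf.smul hg (p := 2) (q := 2) (r := 1)
    (hpqr := ⟨by rw [inv_one]; exact ENNReal.inv_two_add_inv_two⟩)
  rw [← memLp_one_iff_integrable]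
  have h' : MemLp (f * g) 1 μ := by simpa [smul_eq_mul, mul_comm] using h
  exact h'

section core
variable {κ : Type*} [DecidableEq κ] {e : κ → Ω → ℝ} {m4 : ℝ}

lemma aux_key0 (hmeas : ∀ w, Measurable (e w))
    (hindep : iIndepFun e μ)
    {w x y z : κ} (hwy : w ≠ y) (hwz : w ≠ z) (hxy : x ≠ y) (hxz : x ≠ z) :
    ∫ ω, e w ω * e x ω * e y ω * e z ω ∂μ
      = (∫ ω, e w ω * e x ω ∂μ) * (∫ ω, e y ω * e z ω ∂μ) := by
  have hi := hindep.indepFun_mul_mul hmeas w x y z hwy hwz hxy hxz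
  have h := hi.integral_mul_eq_mul_integral (((hmeas w).mul (hmeas x)).aestronglyMeasurable)
    (((hmeas y).mul (hmeas z)).aestronglyMeasurable)
  simpa [Pi.mul_apply, mul_assoc] using h

lemma aux_key2 (hmeas : ∀ w, Measurable (e w))
    (hindep : iIndepFun e μ)
    (hmean : ∀ w, ∫ ω, e w ω ∂μ = 0)
    {w x : κ} (hwx : w ≠ x) : ∫ ω, e w ω * e x ω ∂μ = 0 := by
  have h := (hindep.indepFun hwx).integral_mul_eq_mul_integral
    (hmeas w).aestronglyMeasurable (hmeas x).aestronglyMeasurable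
  have h2 : ∫ ω, e w ω * e x ω ∂μ = (∫ ω, e w ω ∂μ) * ∫ ω, e x ω ∂μ := by
    simpa [Pi.mul_apply] using h
  rw [h2, hmean, hmean, mul_zero]

lemma aux_key3 (hmeas : ∀ w, Measurable (e w))
    (hindep : iIndepFun e μ)
    (hmean : ∀ w, ∫ ω, e w ω ∂μ = 0)
    {w z : κ} (hwz : w ≠ z) : ∫ ω, e w ω ^ 3 * e z ω ∂μ = 0 := by
  have hi := (hindep.indepFun hwz).comp (g := e z)
    (φ := fun x : ℝ => x ^ 3) (ψ := id) (measurable_id.pow_const 3) measurable_id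
  have h := hi.integral_mul_eq_mul_integral ((hmeas w).pow_const 3).aestronglyMeasurable
    (hmeas z).aestronglyMeasurable
  have h3 : integral μ (id ∘ e z) = 0 := by simpa [Function.comp_def] using hmean z
  have h2 : ∫ ω, e w ω ^ 3 * e z ω ∂μ
      = integral μ ((fun x => x ^ 3) ∘ e w) * integral μ (id ∘ e z) := by
    simpa [Pi.mul_apply, Function.comp_def] using h
  rw [h2, h3, mul_zero]

lemma aux_keyPP (hmeas : ∀ w, Measurable (e w))
    (hindep : iIndepFun e μ)
    (hvar : ∀ w, ∫ ω, e w ω ^ 2 ∂μ = 1)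
    {w y : κ} (hwy : w ≠ y) :
    ∫ ω, e w ω * e w ω * e y ω * e y ω ∂μ = 1 := by
  rw [aux_key0 hmeas hindep hwy hwy hwy hwy]
  have h1 : ∫ ω, e w ω * e w ω ∂μ = 1 := by
    have := hvar w; simpa [pow_two] using this
  have h2 : ∫ ω, e y ω * e y ω ∂μ = 1 := by
    have := hvar y; simpa [pow_two] using this
  rw [h1, h2, mul_one]

lemma aux_key4 (hmeas : ∀ w, Measurable (e w))
    (hindep : iIndepFun e μ)
    (hmean : ∀ w, ∫ ω, e w ω ∂μ = 0)
    (hvar : ∀ w, ∫ ω, e w ω ^ 2 ∂μ = 1)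
    (h4 : ∀ w, ∫ ω, e w ω ^ 4 ∂μ = m4)
    (p q r s : κ) :
    ∫ ω, e p ω * e q ω * e r ω * e s ω ∂μ
      = (if p = q then (1:ℝ) else 0) * (if r = s then 1 else 0)
        + (if p = r then 1 else 0) * (if q = s then 1 else 0)
        + (if p = s then 1 else 0) * (if q = r then 1 else 0)
        + (m4 - 3) *
            ((if p = q then 1 else 0) * ((if q = r then 1 else 0) * (if r = s then 1 else 0))) := by
  have hvv : ∀ w, ∫ ω, e w ω * e w ω ∂μ = 1 := fun w => by
    have := hvar w; simpa [pow_two] using this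
  rcases eq_or_ne p q with hpq | hpq
  · subst hpq
    rcases eq_or_ne r s with hrs | hrs
    · subst hrs
      rcases eq_or_ne p r with hpr | hpr
      · subst hpr
        rw [show (fun ω => e p ω * e p ω * e p ω * e p ω) = (fun ω => e p ω ^ 4)
          from funext fun ω => by ring]
        rw [h4 p]; simp; ring
      · rw [aux_keyPP hmeas hindep hvar hpr]; simp [hpr]
    · rcases eq_or_ne p r with hpr | hpr
      · subst hpr
        rw [show (fun ω => e p ω * e p ω * e p ω * e s ω) = (fun ω => e p ω ^ 3 * e s ω)
          from funext fun ω => by ring]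
        rw [aux_key3 hmeas hindep hmean hrs]
        simp [hrs]
      · rcases eq_or_ne p s with hps | hps
        · subst hps
          rw [show (fun ω => e p ω * e p ω * e r ω * e p ω) = (fun ω => e p ω ^ 3 * e r ω)
            from funext fun ω => by ring]
          rw [aux_key3 hmeas hindep hmean hpr]
          simp [hrs, hpr, Ne.symm hpr]
        · rw [aux_key0 hmeas hindep hpr hps hpr hps, hvv p, aux_key2 hmeas hindep hmean hrs]
          simp [hrs, hpr, hps]
  · rcases eq_or_ne p r with hpr | hpr
    · subst hpr
      rcases eq_or_ne q s with hqs | hqs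
      · subst hqs
        rw [show (fun ω => e p ω * e q ω * e p ω * e q ω)
            = (fun ω => e p ω * e p ω * e q ω * e q ω) from funext fun ω => by ring]
        rw [aux_keyPP hmeas hindep hvar hpq]; simp [hpq, Ne.symm hpq]
      · rcases eq_or_ne p s with hps | hps
        · subst hps
          rw [show (fun ω => e p ω * e q ω * e p ω * e p ω) = (fun ω => e p ω ^ 3 * e q ω)
            from funext fun ω => by ring]
          rw [aux_key3 hmeas hindep hmean hpq]
          simp [hpq, hqs, Ne.symm hpq]
        · rw [show (fun ω => e p ω * e q ω * e p ω * e s ω)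
              = (fun ω => e p ω * e p ω * e q ω * e s ω) from funext fun ω => by ring]
          rw [aux_key0 hmeas hindep hpq hps hpq hps, hvv p, aux_key2 hmeas hindep hmean hqs]
          simp [hpq, hqs, hps]
    · rcases eq_or_ne p s with hps | hps
      · subst hps
        rcases eq_or_ne q r with hqr | hqr
        · subst hqr
          rw [show (fun ω => e p ω * e q ω * e q ω * e p ω)
              = (fun ω => e p ω * e p ω * e q ω * e q ω) from funext fun ω => by ring]
          rw [aux_keyPP hmeas hindep hvar hpq]; simp [hpq, hpr, Ne.symm hpq]
        · rw [show (fun ω => e p ω * e q ω * e r ω * e p ω)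
              = (fun ω => e p ω * e p ω * e q ω * e r ω) from funext fun ω => by ring]
          rw [aux_key0 hmeas hindep hpq hpr hpq hpr, hvv p, aux_key2 hmeas hindep hmean hqr]
          simp [hpq, hpr, hqr]
      · rcases eq_or_ne q r with hqr | hqr
        · subst hqr
          rcases eq_or_ne q s with hqs | hqs
          · subst hqs
            rw [show (fun ω => e p ω * e q ω * e q ω * e q ω) = (fun ω => e q ω ^ 3 * e p ω)
              from funext fun ω => by ring]
            rw [aux_key3 hmeas hindep hmean (Ne.symm hpq)]
            simp [hpq, hpr, hps]
          · rw [show (fun ω => e p ω * e q ω * e q ω * e s ω)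
                = (fun ω => e q ω * e q ω * e p ω * e s ω) from funext fun ω => by ring]
            rw [aux_key0 hmeas hindep (Ne.symm hpq) hqs (Ne.symm hpq) hqs, hvv q,
              aux_key2 hmeas hindep hmean hps]
            simp [hpq, hpr, hps, hqs]
        · rcases eq_or_ne q s with hqs | hqs
          · subst hqs
            rw [show (fun ω => e p ω * e q ω * e r ω * e q ω)
                = (fun ω => e q ω * e q ω * e p ω * e r ω) from funext fun ω => by ring]
            rw [aux_key0 hmeas hindep (Ne.symm hpq) hqr (Ne.symm hpq) hqr, hvv q,
              aux_key2 hmeas hindep hmean hpr]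
            simp [hpq, hpr, hps, hqr]
          · rw [aux_key0 hmeas hindep hpr hps hqr hqs, aux_key2 hmeas hindep hmean hpq, zero_mul]
            simp [hpq, hpr, hps, hqr, hqs]
end core
end helpers

section alg
variable {α : Type*} [Fintype α] [DecidableEq α]

lemma aux_expand4 (A B C D : α → ℝ) :
    ((∑ p, A p) * (∑ q, B q)) * ((∑ r, C r) * (∑ s, D s))
      = ∑ p, ∑ q, ∑ r, ∑ s, A p * B q * C r * D s := by
  rw [Finset.sum_mul_sum, Finset.sum_mul_sum, Finset.sum_mul]
  refine Finset.sum_congr rfl fun p _ => ?_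
  rw [Finset.sum_mul]
  refine Finset.sum_congr rfl fun q _ => ?_
  rw [Finset.mul_sum]
  refine Finset.sum_congr rfl fun r _ => ?_
  rw [Finset.mul_sum]
  exact Finset.sum_congr rfl fun s _ => by ring

lemma aux_expand4' (A B C D : α → ℝ) (a b c d : α → ℝ) :
    ((∑ p, A p * a p) * (∑ q, B q * b q)) * ((∑ r, C r * c r) * (∑ s, D s * d s))
      = ∑ p, ∑ q, ∑ r, ∑ s, (A p * B q * C r * D s) * (a p * b q * c r * d s) := by
  rw [aux_expand4]
  exact Finset.sum_congr rfl fun p _ => Finset.sum_congr rfl fun q _ =>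
    Finset.sum_congr rfl fun r _ => Finset.sum_congr rfl fun s _ => by ring

lemma aux_ev1 (u v x y : α → ℝ) :
    (∑ p, ∑ q, ∑ r, ∑ s, (u p * v q * x r * y s) *
        ((if p = q then (1:ℝ) else 0) * (if r = s then 1 else 0)))
      = (∑ p, u p * v p) * (∑ r, x r * y r) := by
  simp only [mul_ite, ite_mul, mul_zero, zero_mul, mul_one, one_mul,
    Finset.sum_ite_eq, Finset.sum_ite_eq', Finset.mem_univ, if_true,
    Finset.sum_ite_irrel, Finset.sum_const_zero]
  rw [Finset.sum_mul_sum]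
  exact Finset.sum_congr rfl fun p _ => Finset.sum_congr rfl fun r _ => by ring

lemma aux_ev2 (u v x y : α → ℝ) :
    (∑ p, ∑ q, ∑ r, ∑ s, (u p * v q * x r * y s) *
        ((if p = r then (1:ℝ) else 0) * (if q = s then 1 else 0)))
      = ∑ p, ∑ q, u p * v q * x p * y q := by
  simp only [mul_ite, ite_mul, mul_zero, zero_mul, mul_one, one_mul,
    Finset.sum_ite_eq, Finset.sum_ite_eq', Finset.mem_univ, if_true,
    Finset.sum_ite_irrel, Finset.sum_const_zero]

lemma aux_ev3 (u v x y : α → ℝ) :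
    (∑ p, ∑ q, ∑ r, ∑ s, (u p * v q * x r * y s) *
        ((if p = s then (1:ℝ) else 0) * (if q = r then 1 else 0)))
      = ∑ p, ∑ q, u p * v q * x q * y p := by
  simp only [mul_ite, ite_mul, mul_zero, zero_mul, mul_one, one_mul,
    Finset.sum_ite_eq, Finset.sum_ite_eq', Finset.mem_univ, if_true,
    Finset.sum_ite_irrel, Finset.sum_const_zero]

lemma aux_ev4 (u v x y : α → ℝ) :
    (∑ p, ∑ q, ∑ r, ∑ s, (u p * v q * x r * y s) *
        ((if p = q then (1:ℝ) else 0) * ((if q = r then 1 else 0) * (if r = s then 1 else 0))))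
      = ∑ p, u p * v p * x p * y p := by
  simp only [mul_ite, ite_mul, mul_zero, zero_mul, mul_one, one_mul,
    Finset.sum_ite_eq, Finset.sum_ite_eq', Finset.mem_univ, if_true,
    Finset.sum_ite_irrel, Finset.sum_const_zero]

lemma aux_offdiag (f : α → α → ℝ) :
    (∑ p, ∑ q, (if p = q then 0 else f p q)) = (∑ p, ∑ q, f p q) - ∑ p, f p p := by
  rw [← Finset.sum_sub_distrib]
  refine Finset.sum_congr rfl fun p _ => ?_
  rw [show (∑ q, f p q) - f p p = ∑ q, (f p q - if p = q then f p q else 0) by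
    rw [Finset.sum_sub_distrib, Finset.sum_ite_eq, if_pos (Finset.mem_univ p)]]
  exact Finset.sum_congr rfl fun q _ => by by_cases h : p = q <;> simp [h]

lemma aux_diag_split {β : Type*} [Fintype β] [DecidableEq β] (T G : ℝ) :
    (∑ a : β, ∑ b : β, if a = b then T else G)
      = (Fintype.card β : ℝ) * (T - G) + ((Fintype.card β : ℝ) * (Fintype.card β : ℝ)) * G := by
  have h1 : ∀ a b : β, (if a = b then T else G) = (if a = b then T - G else 0) + G := by
    intro a b; by_cases h : a = b <;> simp [h]
  simp only [h1, Finset.sum_add_distrib, Finset.sum_ite_eq, Finset.mem_univ, if_true,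
    Finset.sum_const, Finset.card_univ, nsmul_eq_mul]
  ring
end alg


/-- Covariance of the Monte-Carlo weight estimators:
`Cov(γ̂²_{ij}, γ̂²_{kℓ}) = E[γ̂²_{ij} γ̂²_{kℓ}] − γ²_{ij} γ²_{kℓ}
  = (1/N) { V[ε₁₁²] ∑_p W_{ip} W_{jp} W_{kp} W_{ℓp}
    + E[ε₁₁²]² ∑_{p≠q} W_{ip} W_{jq} W_{kp} W_{ℓq}
    + E[ε₁₁²]² ∑_{p≠q} W_{ip} W_{jq} W_{kq} W_{ℓp} }`, where
`γ²_{ij} = ∑_p W_{ip} W_{jp}`. -/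
theorem mc_weight_estimator_covariance
    {Ω : Type*} [MeasurableSpace Ω] (μ : Measure Ω) [IsProbabilityMeasure μ]
    {M n N : ℕ} (hn : 0 < n) (hN : 0 < N)
    (W : Matrix (Fin M) (Fin n) ℝ)
    (ε : Fin n × Fin N → Ω → ℝ)
    (hmeas : ∀ pk, Measurable (ε pk))
    (hindep : iIndepFun ε μ)
    (hident : ∀ pk qk, IdentDistrib (ε pk) (ε qk) μ μ)
    (hL4 : ∀ pk, MemLp (ε pk) 4 μ)
    (hmean : ∀ pk, ∫ ω, ε pk ω ∂μ = 0)
    (hvar : ∀ pk, ∫ ω, (ε pk ω) ^ 2 ∂μ = 1)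
    (i j k l : Fin M) :
    (∫ ω,
        ((N : ℝ)⁻¹ * ∑ a : Fin N,
            (∑ p : Fin n, W i p * ε (p, a) ω) * (∑ p : Fin n, W j p * ε (p, a) ω)) *
        ((N : ℝ)⁻¹ * ∑ b : Fin N,
            (∑ p : Fin n, W k p * ε (p, b) ω) * (∑ p : Fin n, W l p * ε (p, b) ω)) ∂μ)
      - (∑ p : Fin n, W i p * W j p) * (∑ p : Fin n, W k p * W l p)
      = (N : ℝ)⁻¹ *
          (variance (fun ω => (ε (⟨0, hn⟩, ⟨0, hN⟩) ω) ^ 2) μ *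
              ∑ p : Fin n, W i p * W j p * W k p * W l p
            + (∫ ω, (ε (⟨0, hn⟩, ⟨0, hN⟩) ω) ^ 2 ∂μ) ^ 2 *
                ∑ p : Fin n, ∑ q : Fin n,
                  (if p = q then 0 else W i p * W j q * W k p * W l q)
            + (∫ ω, (ε (⟨0, hn⟩, ⟨0, hN⟩) ω) ^ 2 ∂μ) ^ 2 *
                ∑ p : Fin n, ∑ q : Fin n,
                  (if p = q then 0 else W i p * W j q * W k q * W l p)) := by
  classical
  set e0 : Fin n × Fin N := (⟨0, hn⟩, ⟨0, hN⟩) with he0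
  set m4 : ℝ := ∫ ω, ε e0 ω ^ 4 ∂μ with hm4
  -- moments
  have h4 : ∀ w, ∫ ω, ε w ω ^ 4 ∂μ = m4 := by
    intro w
    have := ((hident w e0).comp (measurable_id.pow_const 4)).integral_eq
    simpa [Function.comp_def] using this
  -- integrability of four-fold products
  have hint4 : ∀ w x y z : Fin n × Fin N,
      Integrable (fun ω => ε w ω * ε x ω * ε y ω * ε z ω) μ := by
    intro w x y z
    have h := aux_integrable_mul2 (aux_memLp_mul4 (hL4 w) (hL4 x)) (aux_memLp_mul4 (hL4 y) (hL4 z))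
    simpa [mul_assoc] using h
  -- pair expectation
  have hpair : ∀ (c : Fin N) (p q : Fin n),
      ∫ ω, ε (p, c) ω * ε (q, c) ω ∂μ = if p = q then 1 else 0 := by
    intro c p q
    by_cases h : p = q
    · subst h; rw [if_pos rfl]
      have := hvar (p, c); simpa [pow_two] using this
    · rw [if_neg h]
      exact aux_key2 hmeas hindep hmean (by simp [h])
  -- cross-column four-fold expectation
  have hFcross : ∀ (a b : Fin N), a ≠ b → ∀ p q r s : Fin n,
      ∫ ω, ε (p, a) ω * ε (q, a) ω * ε (r, b) ω * ε (s, b) ω ∂μ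
        = (if p = q then (1:ℝ) else 0) * (if r = s then 1 else 0) := by
    intro a b hab p q r s
    rw [aux_key0 hmeas hindep (by simp [hab]) (by simp [hab]) (by simp [hab]) (by simp [hab]),
      hpair, hpair]
  -- same-column four-fold expectation
  have hFsame : ∀ (a : Fin N) (p q r s : Fin n),
      ∫ ω, ε (p, a) ω * ε (q, a) ω * ε (r, a) ω * ε (s, a) ω ∂μ
        = (if p = q then (1:ℝ) else 0) * (if r = s then 1 else 0)
          + (if p = r then 1 else 0) * (if q = s then 1 else 0)
          + (if p = s then 1 else 0) * (if q = r then 1 else 0)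
          + (m4 - 3) * ((if p = q then 1 else 0) *
              ((if q = r then 1 else 0) * (if r = s then 1 else 0))) := by
    intro a p q r s
    rw [aux_key4 hmeas hindep hmean hvar h4 (p, a) (q, a) (r, a) (s, a)]
    simp [Prod.ext_iff]
  -- abbreviations
  set G : ℝ := (∑ p : Fin n, W i p * W j p) * (∑ p : Fin n, W k p * W l p) with hG
  set S2 : ℝ := ∑ p : Fin n, ∑ q : Fin n, W i p * W j q * W k p * W l q with hS2
  set S3 : ℝ := ∑ p : Fin n, ∑ q : Fin n, W i p * W j q * W k q * W l p with hS3
  set S4 : ℝ := ∑ p : Fin n, W i p * W j p * W k p * W l p with hS4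
  -- integral of inner quadruple sum
  have hexp_ab : ∀ a b : Fin N,
      ∫ ω, (∑ p : Fin n, ∑ q : Fin n, ∑ r : Fin n, ∑ s : Fin n,
          (W i p * W j q * W k r * W l s) *
            (ε (p, a) ω * ε (q, a) ω * ε (r, b) ω * ε (s, b) ω)) ∂μ
        = ∑ p : Fin n, ∑ q : Fin n, ∑ r : Fin n, ∑ s : Fin n,
            (W i p * W j q * W k r * W l s) *
              (∫ ω, ε (p, a) ω * ε (q, a) ω * ε (r, b) ω * ε (s, b) ω ∂μ) := by
    intro a b
    rw [integral_finset_sum _ (fun p _ => integrable_finset_sum _ (fun q _ =>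
      integrable_finset_sum _ (fun r _ => integrable_finset_sum _ (fun s _ =>
        (hint4 _ _ _ _).const_mul _))))]
    refine Finset.sum_congr rfl fun p _ => ?_
    rw [integral_finset_sum _ (fun q _ => integrable_finset_sum _ (fun r _ =>
      integrable_finset_sum _ (fun s _ => (hint4 _ _ _ _).const_mul _)))]
    refine Finset.sum_congr rfl fun q _ => ?_
    rw [integral_finset_sum _ (fun r _ => integrable_finset_sum _ (fun s _ =>
      (hint4 _ _ _ _).const_mul _))]
    refine Finset.sum_congr rfl fun r _ => ?_
    rw [integral_finset_sum _ (fun s _ => (hint4 _ _ _ _).const_mul _)]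
    exact Finset.sum_congr rfl fun s _ => integral_const_mul _ _
  -- value of the quadruple sum
  have hvalue : ∀ a b : Fin N,
      (∑ p : Fin n, ∑ q : Fin n, ∑ r : Fin n, ∑ s : Fin n,
          (W i p * W j q * W k r * W l s) *
            (∫ ω, ε (p, a) ω * ε (q, a) ω * ε (r, b) ω * ε (s, b) ω ∂μ))
        = if a = b then G + S2 + S3 + (m4 - 3) * S4 else G := by
    intro a b
    by_cases hab : a = b
    · subst hab
      rw [if_pos rfl]
      have hrw : (∑ p : Fin n, ∑ q : Fin n, ∑ r : Fin n, ∑ s : Fin n,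
          (W i p * W j q * W k r * W l s) *
            (∫ ω, ε (p, a) ω * ε (q, a) ω * ε (r, a) ω * ε (s, a) ω ∂μ))
          = ∑ p : Fin n, ∑ q : Fin n, ∑ r : Fin n, ∑ s : Fin n,
            ((W i p * W j q * W k r * W l s) *
              ((if p = q then (1:ℝ) else 0) * (if r = s then 1 else 0))
            + (W i p * W j q * W k r * W l s) *
              ((if p = r then 1 else 0) * (if q = s then 1 else 0))
            + (W i p * W j q * W k r * W l s) *
              ((if p = s then 1 else 0) * (if q = r then 1 else 0))
            + (m4 - 3) * ((W i p * W j q * W k r * W l s) *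
                ((if p = q then 1 else 0) *
                  ((if q = r then 1 else 0) * (if r = s then 1 else 0))))) := by
        refine Finset.sum_congr rfl fun p _ => Finset.sum_congr rfl fun q _ =>
          Finset.sum_congr rfl fun r _ => Finset.sum_congr rfl fun s _ => ?_
        rw [hFsame a p q r s]; ring
      rw [hrw]
      simp only [Finset.sum_add_distrib, ← Finset.mul_sum]
      rw [aux_ev1 (W i) (W j) (W k) (W l), aux_ev2 (W i) (W j) (W k) (W l),
        aux_ev3 (W i) (W j) (W k) (W l), aux_ev4 (W i) (W j) (W k) (W l)]
    · rw [if_neg hab]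
      have hrw : (∑ p : Fin n, ∑ q : Fin n, ∑ r : Fin n, ∑ s : Fin n,
          (W i p * W j q * W k r * W l s) *
            (∫ ω, ε (p, a) ω * ε (q, a) ω * ε (r, b) ω * ε (s, b) ω ∂μ))
          = ∑ p : Fin n, ∑ q : Fin n, ∑ r : Fin n, ∑ s : Fin n,
              (W i p * W j q * W k r * W l s) *
                ((if p = q then (1:ℝ) else 0) * (if r = s then 1 else 0)) := by
        refine Finset.sum_congr rfl fun p _ => Finset.sum_congr rfl fun q _ =>
          Finset.sum_congr rfl fun r _ => Finset.sum_congr rfl fun s _ => ?_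
        rw [hFcross a b hab p q r s]
      rw [hrw, aux_ev1 (W i) (W j) (W k) (W l)]
  -- expand the integrand
  have hfun : (fun ω =>
        ((N : ℝ)⁻¹ * ∑ a : Fin N,
            (∑ p : Fin n, W i p * ε (p, a) ω) * (∑ p : Fin n, W j p * ε (p, a) ω)) *
        ((N : ℝ)⁻¹ * ∑ b : Fin N,
            (∑ p : Fin n, W k p * ε (p, b) ω) * (∑ p : Fin n, W l p * ε (p, b) ω)))
      = fun ω => (N : ℝ)⁻¹ * ((N : ℝ)⁻¹ *
          ∑ a : Fin N, ∑ b : Fin N, ∑ p : Fin n, ∑ q : Fin n, ∑ r : Fin n, ∑ s : Fin n,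
            (W i p * W j q * W k r * W l s) *
              (ε (p, a) ω * ε (q, a) ω * ε (r, b) ω * ε (s, b) ω)) := by
    funext ω
    have h1 : (∑ a : Fin N,
          (∑ p : Fin n, W i p * ε (p, a) ω) * (∑ p : Fin n, W j p * ε (p, a) ω)) *
        (∑ b : Fin N,
          (∑ p : Fin n, W k p * ε (p, b) ω) * (∑ p : Fin n, W l p * ε (p, b) ω))
        = ∑ a : Fin N, ∑ b : Fin N, ∑ p : Fin n, ∑ q : Fin n, ∑ r : Fin n, ∑ s : Fin n,
            (W i p * W j q * W k r * W l s) *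
              (ε (p, a) ω * ε (q, a) ω * ε (r, b) ω * ε (s, b) ω) := by
      rw [Finset.sum_mul_sum]
      refine Finset.sum_congr rfl fun a _ => Finset.sum_congr rfl fun b _ => ?_
      exact aux_expand4' (W i) (W j) (W k) (W l) (fun p => ε (p, a) ω)
        (fun q => ε (q, a) ω) (fun r => ε (r, b) ω) (fun s => ε (s, b) ω)
    rw [← h1]; ring
  rw [hfun, integral_const_mul, integral_const_mul]
  -- compute the double-sum integral
  have hbig : (∫ ω, (∑ a : Fin N, ∑ b : Fin N,
        ∑ p : Fin n, ∑ q : Fin n, ∑ r : Fin n, ∑ s : Fin n,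
          (W i p * W j q * W k r * W l s) *
            (ε (p, a) ω * ε (q, a) ω * ε (r, b) ω * ε (s, b) ω)) ∂μ)
      = ∑ a : Fin N, ∑ b : Fin N, if a = b then G + S2 + S3 + (m4 - 3) * S4 else G := by
    have hIin : ∀ a b : Fin N, Integrable (fun ω =>
        ∑ p : Fin n, ∑ q : Fin n, ∑ r : Fin n, ∑ s : Fin n,
          (W i p * W j q * W k r * W l s) *
            (ε (p, a) ω * ε (q, a) ω * ε (r, b) ω * ε (s, b) ω)) μ := by
      intro a b
      exact integrable_finset_sum _ (fun p _ => integrable_finset_sum _ (fun q _ =>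
        integrable_finset_sum _ (fun r _ => integrable_finset_sum _ (fun s _ =>
          (hint4 _ _ _ _).const_mul _))))
    rw [integral_finset_sum _ (fun a _ => integrable_finset_sum _ (fun b _ => hIin a b))]
    refine Finset.sum_congr rfl fun a _ => ?_
    rw [integral_finset_sum _ (fun b _ => hIin a b)]
    refine Finset.sum_congr rfl fun b _ => ?_
    rw [hexp_ab a b, hvalue a b]
  rw [hbig, aux_diag_split]
  -- variance and second moment
  have hv2 : ∫ ω, ε e0 ω ^ 2 ∂μ = 1 := hvar e0
  have hX2 : MemLp (fun ω => ε e0 ω ^ 2) 2 μ := by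
    have := aux_memLp_mul4 (hL4 e0) (hL4 e0)
    simpa [pow_two] using this
  have hVar : variance (fun ω => ε e0 ω ^ 2) μ = m4 - 1 := by
    rw [variance_eq_sub hX2]
    have h1 : (fun ω => ε e0 ω ^ 2) ^ 2 = fun ω => ε e0 ω ^ 4 := by
      funext ω; simp [Pi.pow_apply]; ring
    rw [h1]
    simp only [hm4]
    rw [hv2]
    norm_num
  rw [hVar, hv2, aux_offdiag, aux_offdiag]
  simp only [Fintype.card_fin]
  rw [← hS2, ← hS3, ← hS4]
  have hNne : (N : ℝ) ≠ 0 := Nat.cast_ne_zero.mpr hN.ne'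
  field_simp
  ring
end
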